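/- arXiv:1211.7264 — 2 statements merged into one kernel-verified Lean document; each statement's English description precedes it below -/
import Mathlib

section
/- Let J be a strongly stable ideal. If x^ε is a monomial not in J and x^ε · x^δ belongs to J for some monomial x^δ, then in the canonical decomposition x^{ε+δ} = x^α ∗_J x^η (with x^α ∈ B_J and min(x^α) ≥ max(x^η)) one has x^η <_Lex x^δ; moreover if |δ| = |η| then x^η <_B x^δ. -/
open MvPolynomial

namespace Paper

/-- Monomials (exponent vectors) in `N` variables. -/
abbrev Mon (N : ℕ) := Fin N →₀ ℕ

variable {N : ℕ}

/-- Total degree of a monomial. -/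
def mdeg (u : Mon N) : ℕ := u.sum fun _ e => e

/-- `BorelStep a b` : `b` is obtained from `a` by one increasing elementary move,
i.e. `x^a · x_j = x^b · x_i` with `i < j`. -/
def BorelStep (a b : Mon N) : Prop :=
  ∃ i j : Fin N, i < j ∧ a + Finsupp.single j 1 = b + Finsupp.single i 1

/-- `BorelLt a b` : `a <_B b`, i.e. `b` is obtained from `a` by a nonempty
sequence of increasing elementary moves. -/
def BorelLt (a b : Mon N) : Prop := Relation.TransGen BorelStep a b

/-- A (combinatorially encoded) monomial ideal: a set of monomials closed
under multiplication by monomials. -/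
def MonIdeal (J : Set (Mon N)) : Prop := ∀ u ∈ J, ∀ d : Mon N, u + d ∈ J

/-- A strongly stable monomial ideal. -/
def StronglyStable (J : Set (Mon N)) : Prop :=
  MonIdeal J ∧ ∀ b ∈ J, ∀ a, BorelLt b a → a ∈ J

/-- The minimal monomial basis `B_J` of a monomial ideal. -/
def MinBasis (J : Set (Mon N)) : Set (Mon N) :=
  {u | u ∈ J ∧ ∀ v ∈ J, v ≤ u → v = u}

/-- `min(x^a) ≥ max(x^h)`. -/
def StarCond (a h : Mon N) : Prop :=
  ∀ i j : Fin N, a i ≠ 0 → h j ≠ 0 → j ≤ i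


/-- `a <_Lex b` for exponent vectors, where larger variables (larger indices)
are more significant. -/
def LexLt {N : ℕ} (a b : Mon N) : Prop :=
  ∃ k : Fin N, a k < b k ∧ ∀ j, k < j → a j = b j

/-! ### Auxiliary machinery: top partial sums and dominance order -/

/-- Top partial sum: the sum of exponents of the variables with index `≥ k`. -/
def T (k : ℕ) (u : Mon N) : ℕ := ∑ i : Fin N, if k ≤ i.val then u i else 0

lemma mdeg_eq (u : Mon N) : mdeg u = ∑ i : Fin N, u i :=
  Finsupp.sum_fintype u _ (fun _ => rfl)

lemma T_zero (u : Mon N) : T 0 u = mdeg u := by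
  simp [T, mdeg_eq]

lemma mdeg_add (u v : Mon N) : mdeg (u + v) = mdeg u + mdeg v := by
  simp [mdeg_eq, Finsupp.add_apply, Finset.sum_add_distrib]

lemma T_add (k : ℕ) (u v : Mon N) : T k (u + v) = T k u + T k v := by
  simp only [T, Finsupp.add_apply]
  rw [← Finset.sum_add_distrib]
  refine Finset.sum_congr rfl fun i _ => ?_
  split <;> simp

lemma T_single (k : ℕ) (j : Fin N) :
    T k (Finsupp.single j 1) = if k ≤ j.val then 1 else 0 := by
  classical
  have : ∀ i : Fin N, (if k ≤ i.val then (Finsupp.single j 1) i else 0)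
      = if i = j then (if k ≤ j.val then 1 else 0) else 0 := by
    intro i
    rcases eq_or_ne i j with rfl | h
    · simp [Finsupp.single_apply]
    · simp [Finsupp.single_apply, Ne.symm h, h]
  rw [T, Finset.sum_congr rfl (fun i _ => this i), Finset.sum_ite_eq']
  simp

lemma T_le (k : ℕ) (u : Mon N) : T k u ≤ mdeg u := by
  rw [mdeg_eq, T]
  refine Finset.sum_le_sum fun i _ => ?_
  split <;> simp

lemma T_band (k1 k2 : ℕ) (h : k1 ≤ k2) (u : Mon N) :
    T k1 u = (∑ m : Fin N, if k1 ≤ m.val ∧ m.val < k2 then u m else 0) + T k2 u := by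
  rw [T, T, ← Finset.sum_add_distrib]
  refine Finset.sum_congr rfl fun m _ => ?_
  by_cases h1 : k1 ≤ m.val
  · by_cases h2 : m.val < k2
    · simp [h1, h2, Nat.not_le.mpr (lt_of_lt_of_le h2 (le_refl _)), not_le.mpr h2]
    · simp [h1, h2, Nat.le_of_not_lt h2]
  · have h2 : ¬ k2 ≤ m.val := fun hh => h1 (le_trans h hh)
    simp [h1, h2]

lemma T_succ (i : Fin N) (u : Mon N) : T i.val u = u i + T (i.val + 1) u := by
  rw [T_band i.val (i.val+1) (Nat.le_succ _) u]
  congr 1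
  have : ∀ m : Fin N, (if i.val ≤ m.val ∧ m.val < i.val + 1 then u m else 0)
      = if m = i then u i else 0 := by
    intro m
    rcases eq_or_ne m i with rfl | h
    · simp
    · have : ¬ (i.val ≤ m.val ∧ m.val < i.val + 1) := by
        rintro ⟨h1, h2⟩
        exact h (Fin.ext (Nat.le_antisymm (Nat.lt_succ_iff.mp h2) h1))
      rw [if_neg this, if_neg h]
  rw [Finset.sum_congr rfl (fun m _ => this m), Finset.sum_ite_eq']
  simp

lemma T_prefix_eq {a b : Mon N} {k : ℕ} (h0 : T 0 a = T 0 b)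
    (h : ∀ m : Fin N, m.val < k → a m = b m) : T k a = T k b := by
  have ha := T_band 0 k (Nat.zero_le k) a
  have hb := T_band 0 k (Nat.zero_le k) b
  have hs : (∑ m : Fin N, if 0 ≤ m.val ∧ m.val < k then a m else 0)
      = ∑ m : Fin N, if 0 ≤ m.val ∧ m.val < k then b m else 0 := by
    refine Finset.sum_congr rfl fun m _ => ?_
    by_cases hc : m.val < k
    · simp [hc, h m hc]
    · simp [hc]
  omega

/-- One increasing elementary move towards a dominating monomial. -/
lemma borel_step_exists {a b : Mon N} (hdom : ∀ k, T k a ≤ T k b) (h0 : T 0 a = T 0 b)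
    (hne : a ≠ b) :
    ∃ a', BorelStep a a' ∧ (∀ k, T k a' ≤ T k b) ∧ T 0 a' = T 0 b ∧
      (∑ k ∈ Finset.range (N+1), (T k b - T k a')) <
        ∑ k ∈ Finset.range (N+1), (T k b - T k a) := by
  classical
  -- least index where a and b differ
  have hs : (Finset.univ.filter fun m : Fin N => a m ≠ b m).Nonempty := by
    by_contra hcon
    apply hne
    ext m
    by_contra hm
    exact hcon ⟨m, Finset.mem_filter.mpr ⟨Finset.mem_univ m, hm⟩⟩
  set i := (Finset.univ.filter fun m : Fin N => a m ≠ b m).min' hs with hi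
  have hiab : a i ≠ b i := by
    have := (Finset.univ.filter fun m : Fin N => a m ≠ b m).min'_mem hs
    exact (Finset.mem_filter.mp this).2
  have hprefix : ∀ m : Fin N, m.val < i.val → a m = b m := by
    intro m hm
    by_contra hm2
    have : i ≤ m := Finset.min'_le _ m (Finset.mem_filter.mpr ⟨Finset.mem_univ m, hm2⟩)
    exact absurd hm (Nat.not_lt.mpr this)
  have hTi : T i.val a = T i.val b := T_prefix_eq h0 hprefix
  have hsa := T_succ i a
  have hsb := T_succ i b
  have hdomi := hdom (i.val + 1)
  have hibig : b i < a i := by omega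
  have hTi1 : T (i.val + 1) a < T (i.val + 1) b := by omega
  -- least index j > i with a j < b j
  have ht : (Finset.univ.filter fun m : Fin N => i < m ∧ a m < b m).Nonempty := by
    by_contra hcon
    have hall : ∀ m : Fin N, i < m → b m ≤ a m := by
      intro m hm
      by_contra hm2
      exact hcon ⟨m, Finset.mem_filter.mpr ⟨Finset.mem_univ m, hm, Nat.lt_of_not_le hm2⟩⟩
    have : T (i.val + 1) b ≤ T (i.val + 1) a := by
      refine Finset.sum_le_sum fun m _ => ?_
      by_cases hc : i.val + 1 ≤ m.val
      · simpa [hc] using hall m (by exact hc)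
      · simp [hc]
    omega
  set j := (Finset.univ.filter fun m : Fin N => i < m ∧ a m < b m).min' ht with hj
  have hjmem := (Finset.univ.filter fun m : Fin N => i < m ∧ a m < b m).min'_mem ht
  have hij : i < j := (Finset.mem_filter.mp hjmem).2.1
  have hjab : a j < b j := (Finset.mem_filter.mp hjmem).2.2
  have hmid : ∀ m : Fin N, i < m → m < j → b m ≤ a m := by
    intro m h1 h2
    by_contra hm2
    have : j ≤ m := Finset.min'_le _ m
      (Finset.mem_filter.mpr ⟨Finset.mem_univ m, h1, Nat.lt_of_not_le hm2⟩)
    exact absurd h2 (not_lt.mpr this)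
  -- strict dominance in the window (i, j]
  have hTwin : ∀ k : ℕ, i.val < k → k ≤ j.val → T k a < T k b := by
    intro k hk1 hk2
    have hba := T_band (i.val+1) k hk1 a
    have hbb := T_band (i.val+1) k hk1 b
    have hBB : (∑ m : Fin N, if i.val+1 ≤ m.val ∧ m.val < k then b m else 0)
        ≤ ∑ m : Fin N, if i.val+1 ≤ m.val ∧ m.val < k then a m else 0 := by
      refine Finset.sum_le_sum fun m _ => ?_
      by_cases hc : i.val+1 ≤ m.val ∧ m.val < k
      · have hc1 := hc.1
        have hc2 := hc.2
        have := hmid m (Fin.lt_def.mpr (by omega)) (Fin.lt_def.mpr (by omega))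
        simpa [hc] using this
      · simp only [if_neg hc, le_refl]
    omega
  -- the move
  have hle : Finsupp.single i 1 ≤ a + Finsupp.single j 1 := by
    rw [Finsupp.le_def]
    intro m
    rcases eq_or_ne m i with rfl | hm
    · simp only [Finsupp.single_apply, Finsupp.add_apply, if_pos rfl]
      split <;> omega
    · simp [Finsupp.single_apply, Ne.symm hm, Finsupp.add_apply]
  set a' := a + Finsupp.single j 1 - Finsupp.single i 1 with ha'
  have hstep : a + Finsupp.single j 1 = a' + Finsupp.single i 1 := by
    rw [ha', tsub_add_cancel_of_le hle]
  have key : ∀ k : ℕ, T k a' + (if k ≤ i.val then 1 else 0)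
      = T k a + (if k ≤ j.val then 1 else 0) := by
    intro k
    have := congrArg (T k) hstep
    rw [T_add, T_add, T_single, T_single] at this
    omega
  refine ⟨a', ⟨i, j, hij, hstep⟩, ?_, ?_, ?_⟩
  · intro k
    have hk := key k
    by_cases h1 : k ≤ i.val
    · have h2 : k ≤ j.val := le_trans h1 (le_of_lt hij)
      have := hdom k
      simp [h1, h2] at hk
      omega
    · by_cases h2 : k ≤ j.val
      · have := hTwin k (Nat.lt_of_not_le h1) h2
        simp [h1, h2] at hk
        omega
      · have := hdom k
        simp [h1, h2] at hk
        omega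
  · have hk := key 0
    simp at hk
    omega
  · refine Finset.sum_lt_sum (fun k _ => ?_) ⟨i.val + 1, Finset.mem_range.mpr (by omega), ?_⟩
    · have hk := key k
      have := hdom k
      by_cases h1 : k ≤ i.val
      · have h2 : k ≤ j.val := le_trans h1 (le_of_lt hij)
        simp [h1, h2] at hk
        omega
      · by_cases h2 : k ≤ j.val <;> simp [h1, h2] at hk <;> omega
    · have hk := key (i.val + 1)
      have h1 : ¬ (i.val + 1 ≤ i.val) := by omega
      have h2 : i.val + 1 ≤ j.val := hij
      have := hTwin (i.val+1) (by omega) h2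
      simp [h1, h2] at hk
      omega

/-- Dominance of top partial sums (with equal degree) implies the Borel order. -/
lemma borel_of_dominance : ∀ (n : ℕ) (a b : Mon N),
    (∑ k ∈ Finset.range (N+1), (T k b - T k a)) ≤ n →
    (∀ k, T k a ≤ T k b) → T 0 a = T 0 b → a ≠ b → BorelLt a b := by
  intro n
  induction n with
  | zero =>
    intro a b hphi hdom h0 hne
    exfalso
    apply hne
    have heq : ∀ k ∈ Finset.range (N+1), T k a = T k b := by
      intro k hk
      have : T k b - T k a = 0 :=
        Nat.eq_zero_of_le_zero (le_trans (Finset.single_le_sum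
          (f := fun k => T k b - T k a) (fun _ _ => Nat.zero_le _) hk) hphi)
      have := hdom k
      omega
    ext m
    have h1 : T m.val a = T m.val b := heq m.val (Finset.mem_range.mpr (by omega))
    have h2 : T (m.val+1) a = T (m.val+1) b :=
      heq (m.val+1) (Finset.mem_range.mpr (by omega))
    have hsa := T_succ m a
    have hsb := T_succ m b
    omega
  | succ n ih =>
    intro a b hphi hdom h0 hne
    obtain ⟨a', hstep, hdom', h0', hlt⟩ := borel_step_exists hdom h0 hne
    rcases eq_or_ne a' b with rfl | hne'
    · exact Relation.TransGen.single hstep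
    · exact Relation.TransGen.head hstep (ih a' b (by omega) hdom' h0' hne')

/-- if `x^ε ∉ J` and `x^ε · x^δ ∈ J`, then in the decomposition
`x^{ε+δ} = x^α ∗_J x^η` one has `x^η <_Lex x^δ`; and if `|δ| = |η|` then `x^η <_B x^δ`. -/
theorem star_decomposition_lex {N : ℕ} {J : Set (Mon N)} (hJ : StronglyStable J)
    {ε δ α η : Mon N} (hε : ε ∉ J) (hεδ : ε + δ ∈ J)
    (hα : α ∈ MinBasis J) (hdec : ε + δ = α + η) (hstar : StarCond α η) :
    LexLt η δ ∧ (mdeg η = mdeg δ → BorelLt η δ) := by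
  classical
  have hαJ : α ∈ J := hα.1
  have hpt : ∀ m : Fin N, ε m + δ m = α m + η m := by
    intro m
    have := congrArg (fun u : Mon N => u m) hdec
    simpa [Finsupp.add_apply] using this
  -- a pointwise inequality α ≤ ε would contradict ε ∉ J
  have hcontra : ¬ α ≤ ε := by
    intro hle
    apply hε
    have := hJ.1 α hαJ (ε - α)
    rwa [add_tsub_cancel_of_le hle] at this
  -- Part 1: η <_Lex δ
  have hlex : LexLt η δ := by
    by_contra hcon
    apply hcontra
    rcases eq_or_ne η δ with rfl | hne
    · have : ε = α := add_right_cancel hdec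
      exact this ▸ le_refl α
    · -- largest index where η and δ differ
      have hs : (Finset.univ.filter fun m : Fin N => η m ≠ δ m).Nonempty := by
        by_contra hcon2
        apply hne
        ext m
        by_contra hm
        exact hcon2 ⟨m, Finset.mem_filter.mpr ⟨Finset.mem_univ m, hm⟩⟩
      set k := (Finset.univ.filter fun m : Fin N => η m ≠ δ m).max' hs with hk
      have hkne : η k ≠ δ k := by
        have := (Finset.univ.filter fun m : Fin N => η m ≠ δ m).max'_mem hs
        exact (Finset.mem_filter.mp this).2
      have hsuf : ∀ m : Fin N, k < m → η m = δ m := by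
        intro m hm
        by_contra hm2
        have : m ≤ k := Finset.le_max' _ m (Finset.mem_filter.mpr ⟨Finset.mem_univ m, hm2⟩)
        exact absurd hm (not_lt.mpr this)
      rcases lt_or_gt_of_ne hkne with hlt | hgt
      · exact absurd ⟨k, hlt, hsuf⟩ hcon
      · -- δ k < η k : deduce α ≤ ε pointwise
        rw [Finsupp.le_def]
        intro m
        rcases lt_trichotomy m k with h | h | h
        · have hz : α m = 0 := by
            by_contra hc
            exact absurd (hstar m k hc (by omega)) (not_le.mpr h)
          rw [hz]
          exact Nat.zero_le _
        · rw [h]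
          have := hpt k
          omega
        · have h1 := hsuf m h
          have h2 := hpt m
          omega
  refine ⟨hlex, fun hdeg => ?_⟩
  -- Part 2: the Borel order, via dominance of top sums
  have hne : η ≠ δ := by
    obtain ⟨k, hk, -⟩ := hlex
    intro h
    rw [h] at hk
    omega
  have hdomm : ∀ k, T k η ≤ T k δ := by
    intro k
    have hTsum : T k ε + T k δ = T k α + T k η := by
      have := congrArg (T k) hdec
      rwa [T_add, T_add] at this
    by_cases hex : ∃ m : Fin N, k ≤ m.val ∧ η m ≠ 0
    · obtain ⟨m0, hm0, hη0⟩ := hex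
      have hαfull : T k α = mdeg α := by
        rw [mdeg_eq, T]
        refine Finset.sum_congr rfl fun m _ => ?_
        by_cases hc : k ≤ m.val
        · simp [hc]
        · have hz : α m = 0 := by
            by_contra hc2
            have := Fin.le_def.mp (hstar m m0 hc2 hη0)
            omega
          simp [hc, hz]
      have hmdeg : mdeg ε = mdeg α := by
        have := congrArg mdeg hdec
        rw [mdeg_add, mdeg_add] at this
        omega
      have hTε : T k ε ≤ mdeg ε := T_le k ε
      omega
    · have hz : T k η = 0 := by
        rw [T]
        refine Finset.sum_eq_zero fun m _ => ?_
        by_cases hc : k ≤ m.val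
        · have : η m = 0 := by
            by_contra hc2
            exact hex ⟨m, hc, hc2⟩
          simp [hc, this]
        · simp [hc]
      omega
  have h0 : T 0 η = T 0 δ := by rw [T_zero, T_zero, hdeg]
  exact borel_of_dominance _ η δ le_rfl hdomm h0 hne

end Paper
end

section
/- Let J be a non-zero saturated strongly stable ideal in S and m a positive integer. If I is a non-saturated ideal in the marked family Mf(J_{≥m}), then sat(I) = m and I = (I^sat)_{≥m}. -/
open MvPolynomial

namespace Paper

variable {N : ℕ}

variable (K : Type) [Field K]

/-- The monomial `x^u` as a polynomial. -/
noncomputable def mono {N : ℕ} (u : Mon N) : MvPolynomial (Fin N) K :=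
  MvPolynomial.monomial u (1 : K)

/-- The (actual) monomial ideal of `S` spanned by a set of monomials. -/
noncomputable def idealOf {N : ℕ} (J : Set (Mon N)) : Ideal (MvPolynomial (Fin N) K) :=
  Ideal.span (mono K '' J)

/-- The irrelevant maximal ideal `(x_0, …, x_n)`. -/
noncomputable def irrel (N : ℕ) : Ideal (MvPolynomial (Fin N) K) :=
  Ideal.span (Set.range MvPolynomial.X)

/-- The saturation `I^sat = ⋃_j (I : (x_0,…,x_n)^j)`. -/
noncomputable def satIdeal {N : ℕ} (I : Ideal (MvPolynomial (Fin N) K)) :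
    Ideal (MvPolynomial (Fin N) K) :=
  ⨆ k : ℕ, Submodule.colon I ((irrel K N ^ k : Ideal (MvPolynomial (Fin N) K)) : Set (MvPolynomial (Fin N) K))

/-- The satiety of a homogeneous ideal: the smallest `m` such that
`I_t = (I^sat)_t` for all `t ≥ m`. -/
noncomputable def satiety {N : ℕ} (I : Ideal (MvPolynomial (Fin N) K)) : ℕ :=
  sInf {m | ∀ t, m ≤ t → ∀ p : MvPolynomial (Fin N) K,
    p.IsHomogeneous t → (p ∈ I ↔ p ∈ satIdeal K I)}

/-- The saturation of a combinatorial monomial ideal. -/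
def msat {N : ℕ} (J : Set (Mon N)) : Set (Mon N) :=
  {u | ∃ k : ℕ, ∀ d : Mon N, mdeg d = k → u + d ∈ J}

/-- The satiety of a combinatorial monomial ideal. -/
noncomputable def msatiety {N : ℕ} (J : Set (Mon N)) : ℕ :=
  sInf {m | ∀ u : Mon N, m ≤ mdeg u → (u ∈ J ↔ u ∈ msat J)}

/-- `I ∈ Mf(J)`: `I` is homogeneous and the monomials outside `J` form a
`K`-vector-space basis of `S/I`. -/
def MemMf {N : ℕ} (J : Set (Mon N)) (I : Ideal (MvPolynomial (Fin N) K)) : Prop :=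
  (∀ p ∈ I, ∀ d : ℕ, MvPolynomial.homogeneousComponent d p ∈ I) ∧
  LinearIndependent K
    (fun u : {u : Mon N // u ∉ J} => Ideal.Quotient.mk I (mono K u.1)) ∧
  ⊤ ≤ Submodule.span K
    (Set.range fun u : {u : Mon N // u ∉ J} => Ideal.Quotient.mk I (mono K u.1))

/-- The truncation `J_{≥ m}` of a monomial ideal. -/
def trunc {N : ℕ} (J : Set (Mon N)) (m : ℕ) : Set (Mon N) :=
  {u | u ∈ J ∧ m ≤ mdeg u}


/-! ### Auxiliary lemmas -/

attribute [local instance] MvPolynomial.gradedAlgebra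

section Aux

variable {n : ℕ}

lemma mdeg_eq_sum (d : Mon (n+1)) : mdeg d = ∑ i, d i := by
  rw [mdeg, Finsupp.sum_fintype]; intro _; rfl

lemma mdeg_add_s7 (a b : Mon (n+1)) : mdeg (a + b) = mdeg a + mdeg b := by
  simp [mdeg_eq_sum, Finsupp.add_apply, Finset.sum_add_distrib]

lemma mdeg_single (i : Fin (n+1)) (k : ℕ) : mdeg (Finsupp.single i k) = k := by
  rw [mdeg_eq_sum]
  simp [Finsupp.single_apply]

lemma degree_eq_mdeg (d : Mon (n+1)) : Finsupp.degree d = mdeg d := by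
  rw [Finsupp.degree, mdeg]; rfl

lemma borel_chain : ∀ (s : ℕ) (u d : Mon (n+1)),
    (∑ i ∈ Finset.univ.filter (· ≠ (0 : Fin (n+1))), d i) = s →
    d = Finsupp.single 0 (mdeg d) ∨ BorelLt (u + Finsupp.single 0 (mdeg d)) (u + d) := by
  intro s
  induction s with
  | zero =>
    intro u d hd
    left
    have hz : ∀ i : Fin (n+1), i ≠ 0 → d i = 0 := by
      intro i hi
      exact Finset.sum_eq_zero_iff.mp hd i (by simp [hi])
    have hm : mdeg d = d 0 := by
      rw [mdeg_eq_sum, Finset.sum_eq_single 0]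
      · intro b _ hb; exact hz b hb
      · simp
    ext i
    by_cases hi : i = 0
    · subst hi; simp [hm]
    · simp [Finsupp.single_apply, Ne.symm hi, hi, hz i hi]
  | succ s ih =>
    intro u d hd
    have hex : ∃ j : Fin (n+1), j ≠ 0 ∧ d j ≠ 0 := by
      by_contra h
      push_neg at h
      have : (∑ i ∈ Finset.univ.filter (· ≠ (0 : Fin (n+1))), d i) = 0 := by
        apply Finset.sum_eq_zero
        intro i hi
        simp only [Finset.mem_filter] at hi
        exact h i hi.2
      omega
    obtain ⟨j, hj0, hdj⟩ := hex
    set d' : Mon (n+1) := (d - Finsupp.single j 1) + Finsupp.single 0 1 with hd'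
    have hle : Finsupp.single j 1 ≤ d := by
      rw [Finsupp.single_le_iff]; omega
    have hcancel : (d - Finsupp.single j 1) + Finsupp.single j 1 = d :=
      tsub_add_cancel_of_le hle
    have hstep : BorelStep (u + d') (u + d) := by
      refine ⟨0, j, Fin.pos_of_ne_zero hj0, ?_⟩
      have hdj1 : 1 ≤ d j := Nat.one_le_iff_ne_zero.mpr hdj
      ext i
      by_cases hij : j = i
      · subst hij
        simp [hd', Finsupp.add_apply, Finsupp.tsub_apply, Finsupp.single_apply,
          Ne.symm hj0]
        omega
      · simp only [hd', Finsupp.add_apply, Finsupp.tsub_apply, Finsupp.single_apply,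
          if_neg hij]
        split_ifs <;> omega
    have hmd : mdeg d' = mdeg d := by
      have h2 := congrArg mdeg hcancel
      rw [mdeg_add_s7, mdeg_single] at h2
      rw [hd', mdeg_add_s7, mdeg_single]
      omega
    have hsum : (∑ i ∈ Finset.univ.filter (· ≠ (0 : Fin (n+1))), d' i) = s := by
      have h1 : ∀ i : Fin (n+1), i ≠ 0 → d' i = d i - (Finsupp.single j 1) i := by
        intro i hi
        rw [hd']
        simp [Finsupp.tsub_apply, Finsupp.single_apply, Ne.symm hi]
      rw [Finset.sum_congr rfl (fun i hi => h1 i (Finset.mem_filter.mp hi).2)]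
      have h2 : ∀ i : Fin (n+1), i ∈ Finset.univ.filter (· ≠ (0 : Fin (n+1))) →
          d i - (Finsupp.single j 1) i + (Finsupp.single j 1) i = d i := by
        intro i _
        have := Finsupp.le_def.mp hle i
        omega
      have h3 : (∑ i ∈ Finset.univ.filter (· ≠ (0 : Fin (n+1))), (Finsupp.single j 1 : Mon (n+1)) i) = 1 := by
        have : ∀ i : Fin (n+1), (Finsupp.single j 1 : Mon (n+1)) i = if j = i then 1 else 0 := by
          intro i; rw [Finsupp.single_apply]
        rw [Finset.sum_congr rfl (fun i _ => this i), Finset.sum_ite_eq]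
        simp [hj0]
      have h4 := Finset.sum_congr rfl h2
      rw [Finset.sum_add_distrib, h3] at h4
      rw [hd] at h4
      omega
    rcases ih u d' hsum with h | h
    · right
      rw [hmd] at h
      refine Relation.TransGen.single ?_
      rw [← h]
      exact hstep
    · right
      rw [hmd] at h
      exact h.tail hstep

lemma mem_of_add_single_mem {J : Set (Mon (n+1))} (hss : StronglyStable J)
    (hsat : J = msat J) {u : Mon (n+1)} {k : ℕ}
    (h : u + Finsupp.single 0 k ∈ J) : u ∈ J := by
  rw [hsat]
  refine ⟨k, fun d hd => ?_⟩
  rcases borel_chain (∑ i ∈ Finset.univ.filter (· ≠ (0 : Fin (n+1))), d i) u d rfl with h1 | h1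
  · rwa [h1, hd]
  · rw [hd] at h1
    exact hss.2 _ h _ h1

variable (K : Type) [Field K]

lemma decompose_eq_hc (p : MvPolynomial (Fin (n+1)) K) (i : ℕ) :
    (DirectSum.decompose (homogeneousSubmodule (Fin (n+1)) K) p i : MvPolynomial (Fin (n+1)) K)
      = homogeneousComponent i p :=
  MvPolynomial.decomposition.decompose'_apply p i

variable {K}

lemma hc_mul_left_le {b : MvPolynomial (Fin (n+1)) K} {i : ℕ} (hb : b.IsHomogeneous i)
    (a : MvPolynomial (Fin (n+1)) K) {t : ℕ} (h : i ≤ t) :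
    homogeneousComponent t (b * a) = b * homogeneousComponent (t - i) a := by
  have := DirectSum.coe_decompose_mul_of_left_mem_of_le
    (𝒜 := homogeneousSubmodule (Fin (n+1)) K) (b := a)
    ((mem_homogeneousSubmodule _ _).mpr hb) h
  rwa [decompose_eq_hc, decompose_eq_hc] at this

lemma hc_mul_right_le {b : MvPolynomial (Fin (n+1)) K} {i : ℕ} (hb : b.IsHomogeneous i)
    (a : MvPolynomial (Fin (n+1)) K) {t : ℕ} (h : i ≤ t) :
    homogeneousComponent t (a * b) = homogeneousComponent (t - i) a * b := by
  have := DirectSum.coe_decompose_mul_of_right_mem_of_le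
    (𝒜 := homogeneousSubmodule (Fin (n+1)) K) (a := a)
    ((mem_homogeneousSubmodule _ _).mpr hb) h
  rwa [decompose_eq_hc, decompose_eq_hc] at this

end Aux
section Aux2

variable {n : ℕ} {K : Type} [Field K] {J : Set (Mon (n+1))} {m : ℕ}
  {I : Ideal (MvPolynomial (Fin (n+1)) K)}

lemma coeffs_eq_zero (hI : MemMf K (trunc J m) I)
    (s : Finset (Mon (n+1))) (c : Mon (n+1) → K) (σ : Mon (n+1) → Mon (n+1))
    (hinj : ∀ u ∈ s, ∀ v ∈ s, σ u = σ v → u = v)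
    (hout : ∀ u ∈ s, σ u ∉ trunc J m)
    (hmem : (∑ u ∈ s, c u • mono K (σ u)) ∈ I) : ∀ u ∈ s, c u = 0 := by
  classical
  obtain ⟨hhom, hli, hspan⟩ := hI
  set Φ : MvPolynomial (Fin (n+1)) K →ₗ[K] MvPolynomial (Fin (n+1)) K ⧸ I :=
    (Ideal.Quotient.mkₐ K I).toLinearMap with hΦ
  have hΦeq : ∀ x, Φ x = Ideal.Quotient.mk I x := fun x => rfl
  let e : {x // x ∈ s} ↪ {u : Mon (n+1) // u ∉ trunc J m} :=
    ⟨fun x => ⟨σ x.1, hout x.1 x.2⟩, by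
      rintro ⟨a, ha⟩ ⟨b, hb⟩ h
      simp only [Subtype.mk.injEq] at h
      exact Subtype.ext (hinj a ha b hb h)⟩
  have li2 : LinearIndependent K
      ((fun u : {u : Mon (n+1) // u ∉ trunc J m} => Ideal.Quotient.mk I (mono K u.1)) ∘ e) :=
    hli.comp e e.injective
  rw [Fintype.linearIndependent_iff] at li2
  have h0 : ∑ x : {x // x ∈ s}, c x.1 •
      ((fun u : {u : Mon (n+1) // u ∉ trunc J m} => Ideal.Quotient.mk I (mono K u.1)) ∘ e) x = 0 := by
    have : ∀ x : {x // x ∈ s},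
        c x.1 • ((fun u : {u : Mon (n+1) // u ∉ trunc J m} =>
          Ideal.Quotient.mk I (mono K u.1)) ∘ e) x = Φ (c x.1 • mono K (σ x.1)) := by
      intro x
      rw [map_smul, hΦeq]
      rfl
    rw [Finset.sum_congr rfl (fun x _ => this x), ← map_sum]
    rw [Finset.sum_coe_sort s (fun u => c u • mono K (σ u))]
    rw [hΦeq, Ideal.Quotient.eq_zero_iff_mem]
    exact hmem
  intro u hu
  exact li2 (fun x => c x.1) h0 ⟨u, hu⟩

lemma support_mem_of_mem_span {T : Set (Mon (n+1))} {r : MvPolynomial (Fin (n+1)) K}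
    (hr : r ∈ Submodule.span K (mono K '' T)) : ∀ u ∈ r.support, u ∈ T := by
  classical
  refine Submodule.span_induction (p := fun x _ => ∀ u ∈ x.support, u ∈ T)
    ?_ ?_ ?_ ?_ hr
  · rintro x ⟨v, hv, rfl⟩ u hu
    rw [mono, MvPolynomial.support_monomial] at hu
    simp only [one_ne_zero, if_false, Finset.mem_singleton] at hu
    rwa [hu]
  · simp
  · intro x y _ _ hx hy u hu
    rcases Finset.mem_union.mp (MvPolynomial.support_add hu) with h | h
    · exact hx u h
    · exact hy u h
  · intro a x _ hx u hu
    exact hx u (Finsupp.support_smul hu)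

lemma exists_decomp (hI : MemMf K (trunc J m) I) (f : MvPolynomial (Fin (n+1)) K) :
    ∃ g ∈ I, ∃ r : MvPolynomial (Fin (n+1)) K,
      (∀ u ∈ r.support, u ∉ trunc J m) ∧ f = g + r := by
  classical
  obtain ⟨hhom, hli, hspan⟩ := hI
  set Φ : MvPolynomial (Fin (n+1)) K →ₗ[K] MvPolynomial (Fin (n+1)) K ⧸ I :=
    (Ideal.Quotient.mkₐ K I).toLinearMap with hΦ
  have hΦeq : ∀ x, Φ x = Ideal.Quotient.mk I x := fun x => rfl
  have h1 : Ideal.Quotient.mk I f ∈ Submodule.span K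
      (Set.range fun u : {u : Mon (n+1) // u ∉ trunc J m} =>
        Ideal.Quotient.mk I (mono K u.1)) := hspan Submodule.mem_top
  have h2 : (Set.range fun u : {u : Mon (n+1) // u ∉ trunc J m} =>
      Ideal.Quotient.mk I (mono K u.1)) = Φ '' (mono K '' {u : Mon (n+1) | u ∉ trunc J m}) := by
    ext y
    constructor
    · rintro ⟨⟨u, hu⟩, rfl⟩
      exact ⟨mono K u, ⟨u, hu, rfl⟩, rfl⟩
    · rintro ⟨x, ⟨u, hu, rfl⟩, rfl⟩
      exact ⟨⟨u, hu⟩, rfl⟩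
  rw [h2, ← Submodule.map_span] at h1
  obtain ⟨r, hr, hrf⟩ := h1
  refine ⟨f - r, ?_, r, fun u hu => support_mem_of_mem_span hr u hu, by ring⟩
  rw [← Ideal.Quotient.eq_zero_iff_mem, ← hΦeq, map_sub, hrf, hΦeq, sub_self]

lemma low_zero (hI : MemMf K (trunc J m) I) {f : MvPolynomial (Fin (n+1)) K} {t : ℕ}
    (hf : f ∈ I) (hfh : f.IsHomogeneous t) (htm : t < m) : f = 0 := by
  classical
  have hsum : f = ∑ u ∈ f.support, MvPolynomial.coeff u f • mono K u := by
    conv_lhs => rw [f.as_sum]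
    refine Finset.sum_congr rfl fun u hu => ?_
    rw [mono, MvPolynomial.smul_monomial, smul_eq_mul, mul_one]
  have hz := coeffs_eq_zero hI f.support (fun u => MvPolynomial.coeff u f) id
    (fun u _ v _ h => h)
    (fun u hu hmem => by
      simp only [id_eq] at hmem
      have hd : mdeg u = t := by
        rw [← degree_eq_mdeg, Finsupp.degree_eq_weight_one]
        exact hfh (MvPolynomial.mem_support_iff.mp hu)
      exact absurd hmem.2 (by omega))
    (by simp only [id_eq]; rw [← hsum]; exact hf)
  rw [MvPolynomial.eq_zero_iff]
  intro d
  by_cases hd : d ∈ f.support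
  · exact hz d hd
  · exact MvPolynomial.notMem_support_iff.mp hd

lemma homog_mem (hss : StronglyStable J) (hsat : J = msat J)
    (hI : MemMf K (trunc J m) I) {f : MvPolynomial (Fin (n+1)) K} {t k : ℕ}
    (hfh : f.IsHomogeneous t) (htm : m ≤ t)
    (hk : MvPolynomial.X 0 ^ k * f ∈ I) : f ∈ I := by
  classical
  obtain ⟨g, hg, r, hr, hfgr⟩ := exists_decomp hI f
  set g' := homogeneousComponent t g with hg'def
  set r' := homogeneousComponent t r with hr'def
  have hft : homogeneousComponent t f = f := by
    rw [homogeneousComponent_of_mem ((mem_homogeneousSubmodule _ _).mpr hfh)]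
    simp
  have hdecomp : f = g' + r' := by
    rw [← hft, hfgr, map_add]
  have hg'I : g' ∈ I := hI.1 g hg t
  have hr'supp : ∀ u ∈ r'.support, u ∉ J ∧ mdeg u = t := by
    intro u hu
    have hcoeff := MvPolynomial.mem_support_iff.mp hu
    rw [hr'def, coeff_homogeneousComponent] at hcoeff
    by_cases hd : Finsupp.degree u = t
    · rw [if_pos hd] at hcoeff
      have husupp : u ∈ r.support := MvPolynomial.mem_support_iff.mpr hcoeff
      have hdt : mdeg u = t := by rwa [degree_eq_mdeg] at hd
      refine ⟨fun huJ => hr u husupp ⟨huJ, by omega⟩, hdt⟩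
    · rw [if_neg hd] at hcoeff; exact absurd rfl hcoeff
  have hXr : MvPolynomial.X 0 ^ k * r' ∈ I := by
    have heq : MvPolynomial.X 0 ^ k * r' =
        MvPolynomial.X 0 ^ k * f - MvPolynomial.X 0 ^ k * g' := by
      rw [hdecomp]; ring
    rw [heq]
    exact Ideal.sub_mem _ hk (Ideal.mul_mem_left _ _ hg'I)
  have hexp : MvPolynomial.X 0 ^ k * r' = ∑ u ∈ r'.support,
      MvPolynomial.coeff u r' • mono K (Finsupp.single 0 k + u) := by
    conv_lhs => rw [r'.as_sum]
    rw [Finset.mul_sum]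
    refine Finset.sum_congr rfl fun u hu => ?_
    rw [MvPolynomial.X_pow_eq_monomial, MvPolynomial.monomial_mul, mono,
      MvPolynomial.smul_monomial, smul_eq_mul, mul_one, one_mul]
  have hz := coeffs_eq_zero hI r'.support (fun u => MvPolynomial.coeff u r')
    (fun u => Finsupp.single 0 k + u)
    (fun u _ v _ h => by
      have := congrArg (fun w => w - Finsupp.single (0 : Fin (n+1)) k) h
      simpa using this)
    (fun u hu hmem => by
      have h1 := hmem.1
      rw [add_comm (Finsupp.single (0 : Fin (n+1)) k) u] at h1
      exact (hr'supp u hu).1 (mem_of_add_single_mem hss hsat h1))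
    (by rw [← hexp]; exact hXr)
  have hr'0 : r' = 0 := by
    rw [MvPolynomial.eq_zero_iff]
    intro d
    by_cases hd : d ∈ r'.support
    · exact hz d hd
    · exact MvPolynomial.notMem_support_iff.mp hd
  rw [hdecomp, hr'0, add_zero]
  exact hg'I

end Aux2
section Aux3

variable {n : ℕ} {K : Type} [Field K] {J : Set (Mon (n+1))} {m : ℕ}
  {I : Ideal (MvPolynomial (Fin (n+1)) K)}

lemma comp_mem (hss : StronglyStable J) (hsat : J = msat J)
    (hI : MemMf K (trunc J m) I) {p : MvPolynomial (Fin (n+1)) K} {t k : ℕ}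
    (htm : m ≤ t) (hk : MvPolynomial.X 0 ^ k * p ∈ I) :
    homogeneousComponent t p ∈ I := by
  have hXk : (MvPolynomial.X (R := K) (0 : Fin (n+1)) ^ k).IsHomogeneous k :=
    MvPolynomial.isHomogeneous_X_pow _ _
  have h1 : homogeneousComponent (t + k) (MvPolynomial.X 0 ^ k * p) ∈ I :=
    hI.1 _ hk _
  rw [hc_mul_left_le hXk p (by omega)] at h1
  rw [show t + k - k = t from by omega] at h1
  exact homog_mem hss hsat hI (homogeneousComponent_isHomogeneous t p) htm h1

lemma X0k_mem_irrel_pow (k : ℕ) :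
    (MvPolynomial.X (R := K) (0 : Fin (n+1))) ^ k ∈ irrel K (n+1) ^ k :=
  Ideal.pow_mem_pow (Ideal.subset_span (Set.mem_range_self 0)) k

lemma sat_directed :
    Directed (· ≤ ·) (fun k : ℕ => Submodule.colon I ((irrel K (n+1) ^ k : Ideal (MvPolynomial (Fin (n+1)) K)) : Set (MvPolynomial (Fin (n+1)) K))) := by
  intro a b
  exact ⟨max a b,
    Submodule.colon_mono le_rfl (Ideal.pow_le_pow_right (le_max_left a b)),
    Submodule.colon_mono le_rfl (Ideal.pow_le_pow_right (le_max_right a b))⟩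

lemma mem_sat_iff {p : MvPolynomial (Fin (n+1)) K} :
    p ∈ satIdeal K I ↔ ∃ k, p ∈ Submodule.colon I ((irrel K (n+1) ^ k : Ideal (MvPolynomial (Fin (n+1)) K)) : Set (MvPolynomial (Fin (n+1)) K)) := by
  rw [satIdeal, Submodule.mem_iSup_of_directed _ sat_directed]

lemma I_le_sat : I ≤ satIdeal K I := by
  intro p hp
  rw [mem_sat_iff]
  refine ⟨0, Submodule.mem_colon.mpr fun q _ => ?_⟩
  rw [smul_eq_mul]
  exact Ideal.mul_mem_right _ _ hp

lemma irrel_pow_homog (k : ℕ) :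
    (irrel K (n+1) ^ k).IsHomogeneous (homogeneousSubmodule (Fin (n+1)) K) := by
  induction k with
  | zero =>
    rw [pow_zero, Ideal.one_eq_top]
    exact Ideal.IsHomogeneous.top _
  | succ k ih =>
    rw [pow_succ]
    refine ih.mul (Ideal.homogeneous_span _ _ ?_)
    rintro x ⟨i, rfl⟩
    exact ⟨1, (mem_homogeneousSubmodule _ _).mpr (MvPolynomial.isHomogeneous_X _ i)⟩

lemma hc_mem_irrel_pow {k s : ℕ} {q : MvPolynomial (Fin (n+1)) K}
    (hq : q ∈ irrel K (n+1) ^ k) :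
    homogeneousComponent s q ∈ irrel K (n+1) ^ k := by
  have := irrel_pow_homog (K := K) (n := n) k s hq
  rwa [decompose_eq_hc] at this

lemma hc_colon (hI : MemMf K (trunc J m) I) {p : MvPolynomial (Fin (n+1)) K} {k : ℕ}
    (hp : p ∈ Submodule.colon I ((irrel K (n+1) ^ k : Ideal (MvPolynomial (Fin (n+1)) K)) : Set (MvPolynomial (Fin (n+1)) K))) (t : ℕ) :
    homogeneousComponent t p ∈ Submodule.colon I ((irrel K (n+1) ^ k : Ideal (MvPolynomial (Fin (n+1)) K)) : Set (MvPolynomial (Fin (n+1)) K)) := by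
  rw [Submodule.mem_colon] at hp ⊢
  intro q hq
  rw [smul_eq_mul]
  have hq' : q = ∑ s ∈ Finset.range (q.totalDegree + 1), homogeneousComponent s q :=
    (sum_homogeneousComponent q).symm
  have : homogeneousComponent t p * q =
      ∑ s ∈ Finset.range (q.totalDegree + 1), homogeneousComponent t p * homogeneousComponent s q := by
    rw [← Finset.mul_sum, ← hq']
  rw [this]
  refine Ideal.sum_mem _ fun s _ => ?_
  have h1 : homogeneousComponent s q ∈ irrel K (n+1) ^ k := hc_mem_irrel_pow hq
  have h2 : p * homogeneousComponent s q ∈ I := by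
    have := hp _ h1
    rwa [smul_eq_mul] at this
  have h3 : homogeneousComponent (t + s) (p * homogeneousComponent s q) ∈ I := hI.1 _ h2 _
  rwa [hc_mul_right_le (homogeneousComponent_isHomogeneous s q) p (by omega),
    show t + s - s = t from by omega] at h3

lemma hc_sat (hI : MemMf K (trunc J m) I) {p : MvPolynomial (Fin (n+1)) K}
    (hp : p ∈ satIdeal K I) (t : ℕ) :
    homogeneousComponent t p ∈ satIdeal K I := by
  rw [mem_sat_iff] at hp ⊢
  obtain ⟨k, hk⟩ := hp
  exact ⟨k, hc_colon hI hk t⟩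

lemma sat_X0_mul_mem {p : MvPolynomial (Fin (n+1)) K} {k : ℕ}
    (hp : p ∈ Submodule.colon I ((irrel K (n+1) ^ k : Ideal (MvPolynomial (Fin (n+1)) K)) : Set (MvPolynomial (Fin (n+1)) K))) :
    MvPolynomial.X 0 ^ k * p ∈ I := by
  have := Submodule.mem_colon.mp hp _ (X0k_mem_irrel_pow k)
  rwa [smul_eq_mul, mul_comm] at this

end Aux3
/-- if `J` is a non-zero saturated strongly stable ideal and
`I ∈ Mf(J_{≥m})` is not saturated, then `sat I = m` and `I = (I^sat)_{≥m}`. -/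
theorem markedFamily_trunc_satiety {n : ℕ} (K : Type) [Field K]
    (J : Set (Mon (n + 1))) (I : Ideal (MvPolynomial (Fin (n + 1)) K)) (m : ℕ)
    (hne : J.Nonempty) (hss : StronglyStable J) (hsat : J = msat J) (hm : 0 < m)
    (hI : MemMf K (trunc J m) I) (hns : I ≠ satIdeal K I) :
    satiety K I = m ∧
    ∀ p : MvPolynomial (Fin (n + 1)) K,
      p ∈ I ↔ (p ∈ satIdeal K I ∧
        ∀ d, d < m → MvPolynomial.homogeneousComponent d p = 0) := by
  classical
  have hIle : I ≤ satIdeal K I := I_le_sat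
  have hm_mem : m ∈ {m' | ∀ t, m' ≤ t → ∀ p : MvPolynomial (Fin (n+1)) K,
      p.IsHomogeneous t → (p ∈ I ↔ p ∈ satIdeal K I)} := by
    intro t ht p hp
    constructor
    · exact fun h => hIle h
    · intro h
      obtain ⟨k, hk⟩ := mem_sat_iff.mp h
      exact homog_mem hss hsat hI hp ht (sat_X0_mul_mem hk)
  have hhigh : ∀ p ∈ satIdeal K I, ∀ t, m ≤ t → homogeneousComponent t p ∈ I := by
    intro p hp t ht
    obtain ⟨k, hk⟩ := mem_sat_iff.mp hp
    exact comp_mem hss hsat hI ht (sat_X0_mul_mem hk)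
  have hlb : ∀ m' ∈ {m' | ∀ t, m' ≤ t → ∀ p : MvPolynomial (Fin (n+1)) K,
      p.IsHomogeneous t → (p ∈ I ↔ p ∈ satIdeal K I)}, m ≤ m' := by
    intro m' hm'
    by_contra hlt
    push_neg at hlt
    apply hns
    refine le_antisymm hIle ?_
    intro p hp
    rw [← sum_homogeneousComponent p]
    refine Ideal.sum_mem _ fun t _ => ?_
    rcases le_or_gt m t with h | h
    · exact hhigh p hp t h
    · have hfsat : homogeneousComponent t p ∈ satIdeal K I := hc_sat hI hp t
      have hgsat : MvPolynomial.X 0 ^ (m - 1 - t) * homogeneousComponent t p ∈ satIdeal K I :=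
        Ideal.mul_mem_left _ _ hfsat
      have hghom : (MvPolynomial.X 0 ^ (m-1-t) * homogeneousComponent t p).IsHomogeneous (m-1) := by
        have := (MvPolynomial.isHomogeneous_X_pow (R := K) (0 : Fin (n+1)) (m-1-t)).mul
          (homogeneousComponent_isHomogeneous t p)
        rwa [show m-1-t+t = m-1 from by omega] at this
      have hgI : MvPolynomial.X 0 ^ (m-1-t) * homogeneousComponent t p ∈ I :=
        (hm' (m-1) (by omega) _ hghom).mpr hgsat
      have h0 : MvPolynomial.X 0 ^ (m-1-t) * homogeneousComponent t p = 0 :=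
        low_zero hI hgI hghom (by omega)
      have hX0 : (MvPolynomial.X (R := K) (0 : Fin (n+1))) ^ (m-1-t) ≠ 0 :=
        pow_ne_zero _ (MvPolynomial.X_ne_zero _)
      have hz := (mul_eq_zero.mp h0).resolve_left hX0
      rw [hz]
      exact Ideal.zero_mem _
  constructor
  · have hdef : satiety K I = sInf {m' | ∀ t, m' ≤ t → ∀ p : MvPolynomial (Fin (n+1)) K,
        p.IsHomogeneous t → (p ∈ I ↔ p ∈ satIdeal K I)} := rfl
    rw [hdef]
    exact le_antisymm (Nat.sInf_le hm_mem) (le_csInf ⟨m, hm_mem⟩ hlb)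
  · intro p
    constructor
    · intro hp
      refine ⟨hIle hp, fun d hd => ?_⟩
      exact low_zero hI (hI.1 p hp d) (homogeneousComponent_isHomogeneous d p) hd
    · rintro ⟨hp, hv⟩
      rw [← sum_homogeneousComponent p]
      refine Ideal.sum_mem _ fun t _ => ?_
      rcases le_or_gt m t with h | h
      · exact hhigh p hp t h
      · rw [hv t h]
        exact Ideal.zero_mem _

end Paper
end
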